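/- If the generalized Ryser conjecture holds for intersection parameter t (i.e., every r-uniform r-partite t-intersecting hypergraph with t < r satisfies τ ≤ r − t, for all r > t), then it also holds for parameter t + 1: every r-uniform r-partite (t+1)-intersecting hypergraph with t + 1 < r satisfies τ ≤ r − (t+1). -/
import Mathlib


/-- If the generalized Ryser conjecture holds for intersection
parameter t (every r-uniform r-partite t-intersecting hypergraph with t < r has
τ ≤ r − t), then it holds for parameter t + 1. -/
theorem stmt_3 (t : ℕ)
    (ih : ∀ (V : Type) [DecidableEq V] (r : ℕ) (H : Finset (Finset V))
      (P : V → Fin r),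
      (∀ e ∈ H, ∀ i : Fin r, (e.filter fun v => P v = i).card = 1) →
      (∀ e ∈ H, ∀ f ∈ H, t ≤ (e ∩ f).card) → t < r →
      ∃ T : Finset V, T.card ≤ r - t ∧ ∀ e ∈ H, ∃ v ∈ T, v ∈ e) :
    ∀ (V : Type) [DecidableEq V] (r : ℕ) (H : Finset (Finset V))
      (P : V → Fin r),
      (∀ e ∈ H, ∀ i : Fin r, (e.filter fun v => P v = i).card = 1) →
      (∀ e ∈ H, ∀ f ∈ H, t + 1 ≤ (e ∩ f).card) → t + 1 < r →
      ∃ T : Finset V, T.card ≤ r - (t + 1) ∧ ∀ e ∈ H, ∃ v ∈ T, v ∈ e := by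
  intro V _ r H P h1 h2 hr
  obtain ⟨r', rfl⟩ : ∃ r', r = r' + 1 := ⟨r - 1, by omega⟩
  have hr' : 0 < r' := by omega
  -- Delete the last vertex class.
  set L : Fin (r' + 1) := Fin.last r' with hL
  set H' : Finset (Finset V) :=
    H.image (fun e => e.filter (fun v => P v ≠ L)) with hH'
  set P' : V → Fin r' := fun v =>
    if h : (P v : ℕ) < r' then ⟨P v, h⟩ else ⟨0, hr'⟩ with hP'
  -- key rewriting of the composed filter
  have key : ∀ e : Finset V, ∀ i : Fin r',
      (e.filter (fun v => P v ≠ L)).filter (fun v => P' v = i)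
        = e.filter (fun v => P v = Fin.castSucc i) := by
    intro e i
    rw [Finset.filter_filter]
    apply Finset.filter_congr
    intro v _
    simp only [hP']
    constructor
    · rintro ⟨hne, hi⟩
      have hlt : (P v : ℕ) < r' := by
        have := (P v).isLt
        rcases lt_or_eq_of_le (Nat.lt_succ_iff.mp this) with h | h
        · exact h
        · exact absurd (Fin.ext h) hne
      rw [dif_pos hlt] at hi
      have : (P v : ℕ) = (i : ℕ) := by
        have := congrArg Fin.val hi
        simpa using this
      exact Fin.ext (by simpa using this)
    · intro h
      have hval : (P v : ℕ) = (i : ℕ) := by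
        have := congrArg Fin.val h
        simpa using this
      have hlt : (P v : ℕ) < r' := hval ▸ i.isLt
      constructor
      · intro hc
        rw [hc] at hval
        simp [hL, Fin.last] at hval
        omega
      · rw [dif_pos hlt]
        exact Fin.ext (by simpa using hval)
  have h1' : ∀ e' ∈ H', ∀ i : Fin r', (e'.filter fun v => P' v = i).card = 1 := by
    intro e' he' i
    rw [hH', Finset.mem_image] at he'
    obtain ⟨e, he, rfl⟩ := he'
    rw [key e i]
    exact h1 e he (Fin.castSucc i)
  have h2' : ∀ e' ∈ H', ∀ f' ∈ H', t ≤ (e' ∩ f').card := by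
    intro e' he' f' hf'
    rw [hH', Finset.mem_image] at he' hf'
    obtain ⟨e, he, rfl⟩ := he'
    obtain ⟨f, hf, rfl⟩ := hf'
    rw [← Finset.filter_inter_distrib]
    have hsplit := Finset.card_filter_add_card_filter_not
      (s := e ∩ f) (p := fun v => P v ≠ L)
    have hbound : ((e ∩ f).filter (fun v => ¬ P v ≠ L)).card ≤ 1 := by
      have hsub : (e ∩ f).filter (fun v => ¬ P v ≠ L)
          ⊆ e.filter (fun v => P v = L) := by
        intro v hv
        rw [Finset.mem_filter] at hv ⊢
        exact ⟨(Finset.mem_inter.mp hv.1).1, not_not.mp hv.2⟩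
      calc ((e ∩ f).filter (fun v => ¬ P v ≠ L)).card
          ≤ (e.filter (fun v => P v = L)).card := Finset.card_le_card hsub
        _ = 1 := h1 e he L
    have := h2 e he f hf
    omega
  obtain ⟨T, hTc, hTcov⟩ := ih V r' H' P' h1' h2' (by omega)
  refine ⟨T, by omega, ?_⟩
  intro e he
  have he' : e.filter (fun v => P v ≠ L) ∈ H' := by
    rw [hH', Finset.mem_image]; exact ⟨e, he, rfl⟩
  obtain ⟨v, hvT, hve⟩ := hTcov _ he'
  exact ⟨v, hvT, (Finset.mem_filter.mp hve).1⟩
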